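/- Let K be a field, let a, b ∈ K with a·b ≠ 0, set f(x) = x³ + a·x + b, and fix u ∈ K with f(u) ≠ 0. Consider the rational functions from the three-variable parametrization with n = 3: X₁(t) = u, X₂(t) = −(b/a)·(t⁶·f(u)³ − 1)/(f(u)·(t⁶·f(u)² − t²)), X₃(t) = t²·f(u)·X₂(t). Then the product X₁(t)·X₂(t)·X₃(t), written as N(t)/D(t) with N, D ∈ K[t] relatively prime, satisfies deg N ≤ 8 and deg D ≤ 6. -/

import Mathlib

set_option maxRecDepth 8000 in
set_option maxHeartbeats 1000000 in
/-- For `f(x) = x³ + a·x + b` and fixed `u` with `f(u) ≠ 0`, the product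
`X₁·X₂·X₃` of the rational functions from the three-variable parametrization (case `n = 3`),
written in lowest terms `N/D`, satisfies `deg N ≤ 8` and `deg D ≤ 6`. -/
theorem product_degree_bound (K : Type*) [Field K] (a b : K) (hab : a * b ≠ 0)
    (u : K) (hu : u ^ 3 + a * u + b ≠ 0) :
    let f : K → K := fun x => x ^ 3 + a * x + b
    let T : RatFunc K := RatFunc.X
    let X₁ : RatFunc K := RatFunc.C u
    let X₂ : RatFunc K := -(RatFunc.C (b / a)) *
      ((T ^ 6 * RatFunc.C (f u) ^ 3 - 1) /
        (RatFunc.C (f u) * (T ^ 6 * RatFunc.C (f u) ^ 2 - T ^ 2)))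
    let X₃ : RatFunc K := T ^ 2 * RatFunc.C (f u) * X₂
    (X₁ * X₂ * X₃).num.natDegree ≤ 8 ∧ (X₁ * X₂ * X₃).denom.natDegree ≤ 6 := by
  intro f T X₁ X₂ X₃
  have ha : a ≠ 0 := left_ne_zero_of_mul hab
  have hb : b ≠ 0 := right_ne_zero_of_mul hab
  obtain ⟨c, hc, hfu⟩ : ∃ c, c ≠ 0 ∧ f u = c := ⟨_, hu, rfl⟩
  obtain ⟨k, hk0, hk⟩ : ∃ k, k ≠ 0 ∧ b / a = k := ⟨_, div_ne_zero hb ha, rfl⟩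
  have hgoal : X₁ * X₂ * X₃ = RatFunc.C u * (-(RatFunc.C k) *
      ((RatFunc.X ^ 6 * RatFunc.C c ^ 3 - 1) /
        (RatFunc.C c * (RatFunc.X ^ 6 * RatFunc.C c ^ 2 - RatFunc.X ^ 2)))) ^ 2 *
      (RatFunc.X ^ 2 * RatFunc.C c) := by
    show RatFunc.C u * (-(RatFunc.C (b/a)) * _) * (RatFunc.X ^ 2 * RatFunc.C (f u) *
      (-(RatFunc.C (b/a)) * _)) = _
    rw [hfu, hk]; ring
  rw [hgoal]
  set E : RatFunc K := RatFunc.C u * (-(RatFunc.C k) *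
      ((RatFunc.X ^ 6 * RatFunc.C c ^ 3 - 1) /
        (RatFunc.C c * (RatFunc.X ^ 6 * RatFunc.C c ^ 2 - RatFunc.X ^ 2)))) ^ 2 *
      (RatFunc.X ^ 2 * RatFunc.C c) with hE
  set g : Polynomial K := Polynomial.C c ^ 2 * Polynomial.X ^ 4 +
    Polynomial.C c * Polynomial.X ^ 2 + 1 with hg
  set P : Polynomial K := Polynomial.C u * Polynomial.C k ^ 2 * g ^ 2 with hP
  set Q : Polynomial K := Polynomial.C c * Polynomial.X ^ 2 *
    (Polynomial.C c * Polynomial.X ^ 2 + 1) ^ 2 with hQ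
  set A : Polynomial K := Polynomial.C u * Polynomial.C k ^ 2 *
    (Polynomial.X ^ 6 * Polynomial.C c ^ 3 - 1) ^ 2 *
    (Polynomial.X ^ 2 * Polynomial.C c) with hA
  set D : Polynomial K := (Polynomial.C c *
    (Polynomial.X ^ 6 * Polynomial.C c ^ 2 - Polynomial.X ^ 2)) ^ 2 with hD
  have hg0 : g ≠ 0 := fun h => by
    have := congrArg (Polynomial.eval 0) h
    simp only [hg, Polynomial.eval_add, Polynomial.eval_mul, Polynomial.eval_pow,
      Polynomial.eval_C, Polynomial.eval_X, Polynomial.eval_one, Polynomial.eval_zero] at this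
    norm_num at this
  have hQ0 : Q ≠ 0 := by
    refine mul_ne_zero (mul_ne_zero (by simpa using hc) (pow_ne_zero _ Polynomial.X_ne_zero)) ?_
    intro h
    have := congrArg (Polynomial.eval 0) h
    simp only [Polynomial.eval_add, Polynomial.eval_mul, Polynomial.eval_pow,
      Polynomial.eval_C, Polynomial.eval_X, Polynomial.eval_one, Polynomial.eval_zero] at this
    norm_num at this
  have hd0 : (Polynomial.X ^ 6 * Polynomial.C c ^ 2 - Polynomial.X ^ 2 : Polynomial K) ≠ 0 := by
    have hfact : (Polynomial.X ^ 6 * Polynomial.C c ^ 2 - Polynomial.X ^ 2 : Polynomial K) =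
        Polynomial.X ^ 2 * (Polynomial.X ^ 4 * Polynomial.C c ^ 2 - 1) := by ring
    rw [hfact]
    refine mul_ne_zero (pow_ne_zero _ Polynomial.X_ne_zero) ?_
    intro h
    have := congrArg (Polynomial.eval 0) h
    simp only [Polynomial.eval_sub, Polynomial.eval_mul, Polynomial.eval_pow,
      Polynomial.eval_C, Polynomial.eval_X, Polynomial.eval_one, Polynomial.eval_zero] at this
    norm_num at this
  have hD0 : D ≠ 0 := pow_ne_zero _ (mul_ne_zero (by simpa using hc) hd0)
  have h1 : (RatFunc.C c : RatFunc K) ≠ 0 := by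
    simpa using (RatFunc.algebraMap_ne_zero
      (show (Polynomial.C c : Polynomial K) ≠ 0 by simpa using hc))
  have h2 : (RatFunc.X ^ 6 * RatFunc.C c ^ 2 - RatFunc.X ^ 2 : RatFunc K) ≠ 0 := by
    have := RatFunc.algebraMap_ne_zero hd0
    simpa [map_sub, map_mul, map_pow, RatFunc.algebraMap_C, RatFunc.algebraMap_X] using this
  have h3 : algebraMap (Polynomial K) (RatFunc K) Q ≠ 0 := RatFunc.algebraMap_ne_zero hQ0
  have hDim : algebraMap (Polynomial K) (RatFunc K) D ≠ 0 := RatFunc.algebraMap_ne_zero hD0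
  have hE2 : E = algebraMap (Polynomial K) (RatFunc K) A /
      algebraMap (Polynomial K) (RatFunc K) D := by
    rw [eq_div_iff hDim, hE, hA, hD]
    simp only [map_mul, map_add, map_pow, map_sub, map_one, RatFunc.algebraMap_C,
      RatFunc.algebraMap_X]
    field_simp
    refine mul_div_cancel_right₀ _ ?_
    intro h0; apply h2; linear_combination RatFunc.X ^ 2 * h0
  have heq : E = algebraMap (Polynomial K) (RatFunc K) P /
      algebraMap (Polynomial K) (RatFunc K) Q := by
    rw [hE2, div_eq_div_iff hDim h3, ← map_mul, ← map_mul]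
    exact congrArg _ (by rw [hA, hD, hP, hQ, hg]; ring)
  constructor
  · have hdvd : E.num ∣ P := heq ▸ RatFunc.num_div_dvd P hQ0
    by_cases hu0 : u = 0
    · have h0 : E = 0 := by rw [hE, hu0]; simp
      simp [h0]
    · have hP0 : P ≠ 0 := mul_ne_zero (mul_ne_zero (by simpa using hu0)
        (pow_ne_zero _ (by simpa using hk0))) (pow_ne_zero _ hg0)
      refine le_trans (Polynomial.natDegree_le_of_dvd hdvd hP0) ?_
      rw [hP, hg]
      compute_degree
  · have hdvd : E.denom ∣ Q := heq ▸ RatFunc.denom_div_dvd P Q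
    refine le_trans (Polynomial.natDegree_le_of_dvd hdvd hQ0) ?_
    rw [hQ]
    compute_degree
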